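/- Let S = K[x_1,…,x_n] be a standard graded polynomial ring over a field K and I ⊂ S a proper nonzero graded ideal having no embedded prime (every associated prime of I is a minimal prime of I) and which is normally torsion-free (Ass(I^k) ⊆ Ass(I) for all k ≥ 1). If v_p(I) = α(I) − α(p) for some p ∈ Ass(I), then v_p(I^k) = α(I)·k − α(p) for all k ≥ 1. -/

import Mathlib

open MvPolynomial

/-- A graded (homogeneous) ideal: one generated by homogeneous polynomials. -/
def IsHomogeneousIdeal {K : Type*} [Field K] {n : ℕ}
    (I : Ideal (MvPolynomial (Fin n) K)) : Prop :=
  ∃ G : Set (MvPolynomial (Fin n) K),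
    (∀ f ∈ G, ∃ d, f.IsHomogeneous d) ∧ I = Ideal.span G

/-- `Ass(I)`: the associated primes of `S/I`. -/
def Ass {K : Type*} [Field K] {n : ℕ} (I : Ideal (MvPolynomial (Fin n) K)) :
    Set (Ideal (MvPolynomial (Fin n) K)) :=
  associatedPrimes (MvPolynomial (Fin n) K) (MvPolynomial (Fin n) K ⧸ I)

/-- The local v-number `v_p(I)`. -/
noncomputable def vNumberAt {K : Type*} [Field K] {n : ℕ}
    (I p : Ideal (MvPolynomial (Fin n) K)) : ℕ :=
  sInf {d | ∃ f : MvPolynomial (Fin n) K, f.IsHomogeneous d ∧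
    I.colon (Ideal.span {f}) = p}

/-- The v-number `v(I)`. -/
noncomputable def vNumber {K : Type*} [Field K] {n : ℕ}
    (I : Ideal (MvPolynomial (Fin n) K)) : ℕ :=
  sInf {d | ∃ f : MvPolynomial (Fin n) K, ∃ p ∈ Ass I, f.IsHomogeneous d ∧
    I.colon (Ideal.span {f}) = p}

/-- `α(J)`: the least degree of a nonzero element of `J`. -/
noncomputable def alphaNum {K : Type*} [Field K] {n : ℕ}
    (J : Ideal (MvPolynomial (Fin n) K)) : ℕ :=
  sInf {d | ∃ f ∈ J, f ≠ 0 ∧ f.totalDegree = d}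

/-- `c(I) = max{α(p) : p ∈ Ass(I)}`. -/
noncomputable def cNum {K : Type*} [Field K] {n : ℕ}
    (I : Ideal (MvPolynomial (Fin n) K)) : ℕ :=
  sSup (alphaNum '' Ass I)

/-! ### Auxiliary lemmas -/

namespace Stmt3Aux

section

variable {K : Type*} [Field K] {n : ℕ}

attribute [local instance] MvPolynomial.gradedAlgebra

local notation "S" => MvPolynomial (Fin n) K
local notation "𝒜" => homogeneousSubmodule (Fin n) K

theorem decompose_coe' (φ : S) (i : ℕ) :
    (DirectSum.decompose 𝒜 φ i : S) = homogeneousComponent i φ :=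
  MvPolynomial.decomposition.decompose'_apply φ i

theorem ann_span_mk (L : Ideal S) (c : S) :
    (Submodule.span S {Ideal.Quotient.mk L c}).annihilator = L.colon (Ideal.span {c}) := by
  ext r
  rw [Submodule.mem_annihilator_span_singleton, Ideal.mem_colon_span_singleton,
    ← Ideal.Quotient.mk_eq_mk, ← Submodule.Quotient.mk_smul, smul_eq_mul,
    Ideal.Quotient.mk_eq_mk, Ideal.Quotient.eq_zero_iff_mem]

theorem colon_bot_mk (L : Ideal S) (c : S) :
    (⊥ : Submodule S (S ⧸ L)).colon {Ideal.Quotient.mk L c} = L.colon (Ideal.span {c}) := by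
  ext r
  rw [Ideal.mem_colon_span_singleton, Submodule.mem_colon_singleton, Submodule.mem_bot,
    ← Ideal.Quotient.mk_eq_mk, ← Submodule.Quotient.mk_smul, smul_eq_mul,
    Ideal.Quotient.mk_eq_mk, Ideal.Quotient.eq_zero_iff_mem]

theorem assoc_colon {L p' : Ideal S} (h : IsAssociatedPrime p' (S ⧸ L)) :
    ∃ c : S, L.colon (Ideal.span {c}) = p' := by
  obtain ⟨-, x, hx⟩ := isAssociatedPrime_iff.mp h
  obtain ⟨c, rfl⟩ := Ideal.Quotient.mk_surjective x
  exact ⟨c, by rw [hx, colon_bot_mk]⟩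

theorem isAssociatedPrime_of_colon {L p' : Ideal S} (hpr : p'.IsPrime) (c : S)
    (h : L.colon (Ideal.span {c}) = p') : IsAssociatedPrime p' (S ⧸ L) :=
  isAssociatedPrime_iff.mpr ⟨hpr, ⟨Ideal.Quotient.mk L c, by rw [colon_bot_mk, h]⟩⟩

theorem le_of_isAssociatedPrime' {L p' : Ideal S} (h : IsAssociatedPrime p' (S ⧸ L)) :
    L ≤ p' := by
  obtain ⟨c, hc⟩ := assoc_colon h
  rw [← hc]
  intro a ha
  rw [Ideal.mem_colon_span_singleton]
  exact Ideal.mul_mem_right c L ha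

theorem colon_zero' (L : Ideal S) : L.colon (Ideal.span {(0 : S)}) = ⊤ := by
  rw [Ideal.eq_top_iff_one, Ideal.mem_colon_span_singleton, mul_zero]
  exact L.zero_mem

/-- Components of members of a homogeneous ideal are members. -/
theorem comp_mem' {L : Ideal S} (hL : Ideal.IsHomogeneous 𝒜 L) {f : S} (hf : f ∈ L) (d : ℕ) :
    homogeneousComponent d f ∈ L := by
  have := hL d hf
  rwa [decompose_coe'] at this

theorem isHom_of_isHomogeneousIdeal {L : Ideal S} (h : IsHomogeneousIdeal L) :
    Ideal.IsHomogeneous 𝒜 L := by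
  obtain ⟨G, hG, rfl⟩ := h
  exact Ideal.homogeneous_span 𝒜 G fun x hx => by
    obtain ⟨d, hd⟩ := hG x hx
    exact ⟨d, (mem_homogeneousSubmodule _ _).mpr hd⟩

/-- A minimal prime over a homogeneous ideal is homogeneous. -/
theorem min_prime_homogeneous {L p : Ideal S} (hL : Ideal.IsHomogeneous 𝒜 L)
    (hmin : p ∈ L.minimalPrimes) : Ideal.IsHomogeneous 𝒜 p := by
  have hp : p.IsPrime := hmin.1.1
  have hle : L ≤ p := hmin.1.2
  have hcore : (p.homogeneousCore 𝒜).toIdeal.IsPrime := hp.homogeneousCore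
  have h1 : L ≤ (p.homogeneousCore 𝒜).toIdeal := by
    calc L = (L.homogeneousCore 𝒜).toIdeal := hL.toIdeal_homogeneousCore_eq_self.symm
    _ ≤ (p.homogeneousCore 𝒜).toIdeal :=
        (Ideal.homogeneousCore.gc 𝒜).monotone_l (Ideal.homogeneousCore_mono 𝒜 hle)
  have h2 : p ≤ (p.homogeneousCore 𝒜).toIdeal :=
    hmin.2 ⟨hcore, h1⟩ (Ideal.toIdeal_homogeneousCore_le 𝒜 p)
  have h3 : p = (p.homogeneousCore 𝒜).toIdeal :=
    le_antisymm h2 (Ideal.toIdeal_homogeneousCore_le 𝒜 p)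
  rw [h3]
  exact (p.homogeneousCore 𝒜).isHomogeneous

/-- An associated prime of a homogeneous ideal which is realized as a colon ideal by some
element is realized as a colon ideal by a homogeneous element. -/
theorem exists_homog_witness {L p : Ideal S} (hL : Ideal.IsHomogeneous 𝒜 L)
    (hP : Ideal.IsHomogeneous 𝒜 p) (hp : p.IsPrime) {g : S}
    (hg : L.colon (Ideal.span {g}) = p) :
    ∃ (i : ℕ) (f : S), f.IsHomogeneous i ∧ L.colon (Ideal.span {f}) = p := by
  classical
  set T := Finset.range (g.totalDegree + 1) with hT
  have hAh : ∀ (e : ℕ) (x : S), x.IsHomogeneous e → x ∈ p → ∀ i : ℕ,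
      x * homogeneousComponent i g ∈ L := by
    intro e x hxh hxp i
    by_cases hiT : i ∈ T
    · have hxg : x * g ∈ L := by
        rw [← Ideal.mem_colon_span_singleton (I := L) (x := g)]
        rw [hg]; exact hxp
      have key : x * homogeneousComponent i g = homogeneousComponent (e + i) (x * g) := by
        conv_rhs => rw [← sum_homogeneousComponent g, Finset.mul_sum, map_sum]
        rw [Finset.sum_eq_single i]
        · rw [homogeneousComponent_of_mem
            ((mem_homogeneousSubmodule _ _).mpr
              (hxh.mul (homogeneousComponent_isHomogeneous i g))),
            if_pos rfl]
        · intro j _ hne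
          rw [homogeneousComponent_of_mem
            ((mem_homogeneousSubmodule _ _).mpr
              (hxh.mul (homogeneousComponent_isHomogeneous j g)))]
          rw [if_neg (by omega)]
        · intro h; exact absurd hiT h
      rw [key]
      exact comp_mem' hL hxg _
    · have hz : homogeneousComponent i g = 0 :=
        homogeneousComponent_eq_zero _ g (by simp [hT] at hiT; omega)
      rw [hz, mul_zero]
      exact L.zero_mem
  have hA : ∀ x ∈ p, ∀ i : ℕ, x * homogeneousComponent i g ∈ L := by
    intro x hxp i
    have hx := sum_homogeneousComponent x
    have hEq : x * homogeneousComponent i g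
        = ∑ j ∈ Finset.range (x.totalDegree + 1),
            homogeneousComponent j x * homogeneousComponent i g := by
      rw [← Finset.sum_mul, hx]
    rw [hEq]
    exact Ideal.sum_mem L fun j _ =>
      hAh j _ (homogeneousComponent_isHomogeneous j x) (comp_mem' hP hxp j) i
  have hprod : (∏ i ∈ T, L.colon (Ideal.span {homogeneousComponent i g})) ≤ p := by
    refine le_trans Ideal.prod_le_inf ?_
    rw [← hg]
    intro x hx
    rw [Ideal.mem_colon_span_singleton]
    have hmem : ∀ i ∈ T, x * homogeneousComponent i g ∈ L := fun i hi =>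
      Ideal.mem_colon_span_singleton.mp (Submodule.mem_finsetInf.mp hx i hi)
    have hEq : x * g = ∑ i ∈ T, x * homogeneousComponent i g := by
      rw [← Finset.mul_sum, sum_homogeneousComponent]
    rw [hEq]
    exact Ideal.sum_mem L hmem
  obtain ⟨i, _, hle⟩ := hp.prod_le.mp hprod
  exact ⟨i, homogeneousComponent i g, homogeneousComponent_isHomogeneous i g,
    le_antisymm hle fun x hx => Ideal.mem_colon_span_singleton.mpr (hA x hx i)⟩

open Finsupp in
/-- The ideal of polynomials all of whose monomials have degree at least `D`. -/
def hiIdeal (K : Type*) [Field K] (n D : ℕ) : Ideal (MvPolynomial (Fin n) K) where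
  carrier := {x | ∀ m ∈ x.support, D ≤ Finsupp.degree m}
  zero_mem' := by simp
  add_mem' := by
    classical
    intro a b ha hb m hm
    rcases Finset.mem_union.mp (MvPolynomial.support_add hm) with h | h
    exacts [ha m h, hb m h]
  smul_mem' := by
    classical
    intro c x hx m hm
    rw [smul_eq_mul] at hm
    obtain ⟨a, _, b, hb, rfl⟩ := Finset.mem_add.mp (MvPolynomial.support_mul c x hm)
    rw [show (a + b).degree = a.degree + b.degree by
      simp [Finsupp.degree_eq_weight_one, map_add]]
    exact le_add_self.trans (add_le_add_right (hx b hb) _)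

theorem hiIdeal_mul {D1 D2 : ℕ} : hiIdeal K n D1 * hiIdeal K n D2 ≤ hiIdeal K n (D1 + D2) := by
  classical
  refine Ideal.mul_le.mpr fun r hr s hs => ?_
  intro m hm
  obtain ⟨a, ha, b, hb, rfl⟩ := Finset.mem_add.mp (MvPolynomial.support_mul r s hm)
  rw [show (a + b).degree = a.degree + b.degree by
    simp [Finsupp.degree_eq_weight_one, map_add]]
  exact add_le_add (hr a ha) (hs b hb)

theorem alpha_le' {J : Ideal S} {f : S} (hf : f ∈ J) (h0 : f ≠ 0) :
    alphaNum J ≤ f.totalDegree :=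
  Nat.sInf_le ⟨f, hf, h0, rfl⟩

theorem alpha_mem' {J : Ideal S} (hJ : J ≠ ⊥) :
    ∃ f ∈ J, f ≠ 0 ∧ f.totalDegree = alphaNum J := by
  have hne : {d | ∃ f ∈ J, f ≠ 0 ∧ f.totalDegree = d}.Nonempty := by
    obtain ⟨b, hb, hb0⟩ := Submodule.exists_mem_ne_zero_of_ne_bot hJ
    exact ⟨b.totalDegree, b, hb, hb0, rfl⟩
  obtain ⟨f, hf, h0, hd⟩ := Nat.sInf_mem hne
  exact ⟨f, hf, h0, hd⟩

theorem le_hiIdeal_self {I : Ideal S} (hhom : IsHomogeneousIdeal I) :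
    I ≤ hiIdeal K n (alphaNum I) := by
  obtain ⟨G, hG, hIG⟩ := hhom
  conv_lhs => rw [hIG]
  rw [Ideal.span_le]
  intro g hgG
  by_cases hg0 : g = 0
  · rw [hg0]
    exact (hiIdeal K n (alphaNum I)).zero_mem
  obtain ⟨d, hd⟩ := hG g hgG
  intro m hm
  have hdm : Finsupp.degree m = d := by
    rw [Finsupp.degree_eq_weight_one]
    exact hd (MvPolynomial.mem_support_iff.mp hm)
  rw [hdm, ← hd.totalDegree hg0]
  exact alpha_le' (by rw [hIG]; exact Ideal.subset_span hgG) hg0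

theorem pow_le_hiIdeal {I : Ideal S} {α : ℕ} (h : I ≤ hiIdeal K n α) (k : ℕ) :
    I ^ k ≤ hiIdeal K n (k * α) := by
  induction k with
  | zero =>
      intro x _ m _
      simp
  | succ k ih =>
      rw [pow_succ, show (k + 1) * α = k * α + α by ring]
      exact le_trans (Ideal.mul_mono ih h) hiIdeal_mul

theorem totalDegree_ge_of_mem_hi {D : ℕ} {x : S} (hx : x ∈ hiIdeal K n D) (h0 : x ≠ 0) :
    D ≤ x.totalDegree := by
  obtain ⟨m, hm⟩ := MvPolynomial.support_nonempty.mpr h0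
  exact le_trans (hx m hm) (MvPolynomial.le_totalDegree hm)

theorem alpha_pos {p : Ideal S} (hp : p.IsPrime) (h0 : p ≠ ⊥) : 1 ≤ alphaNum p := by
  by_contra hcon
  have h0' : alphaNum p = 0 := by omega
  obtain ⟨f, hf, hf0, hfd⟩ := alpha_mem' h0
  rw [h0'] at hfd
  have hfh : f.IsHomogeneous 0 := by
    rw [← totalDegree_zero_iff_isHomogeneous]; exact hfd
  have hfC : f = C (coeff 0 f) := by
    have h1 := homogeneousComponent_of_mem (m := 0)
      ((mem_homogeneousSubmodule _ _).mpr hfh)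
    rw [if_pos rfl] at h1
    exact h1.symm.trans (homogeneousComponent_zero f)
  have hc : coeff 0 f ≠ 0 := fun hc => hf0 (by rw [hfC, hc, map_zero])
  have hunit : IsUnit f := by
    rw [hfC]
    exact isUnit_iff_exists_inv.mpr ⟨C (coeff 0 f)⁻¹, by rw [← C_mul, mul_inv_cancel₀ hc, C_1]⟩
  exact hp.ne_top (Ideal.eq_top_of_isUnit_mem p hf hunit)

end

end Stmt3Aux

open Stmt3Aux in
/-- Let `I` be a proper nonzero graded ideal with no embedded prime which is
normally torsion-free. If `v_p(I) = α(I) − α(p)` for some `p ∈ Ass(I)`, then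
`v_p(I^k) = α(I)·k − α(p)` for all `k ≥ 1`. -/
theorem stmt3 {K : Type*} [Field K] {n : ℕ}
    (I : Ideal (MvPolynomial (Fin n) K))
    (hhom : IsHomogeneousIdeal I) (hproper : I ≠ ⊤) (hne : I ≠ ⊥)
    (hnoemb : ∀ q ∈ Ass I, q ∈ I.minimalPrimes)
    (hntf : ∀ k : ℕ, 1 ≤ k → Ass (I ^ k) ⊆ Ass I)
    (p : Ideal (MvPolynomial (Fin n) K)) (hp : p ∈ Ass I)
    (hv : (vNumberAt I p : ℤ) = (alphaNum I : ℤ) - (alphaNum p : ℤ)) :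
    ∀ k : ℕ, 1 ≤ k →
      (vNumberAt (I ^ k) p : ℤ) = (alphaNum I : ℤ) * k - (alphaNum p : ℤ) := by
  classical
  have _inst := MvPolynomial.gradedAlgebra (σ := Fin n) (R := K)
  intro k hk
  obtain ⟨k', rfl⟩ : ∃ k', k = k' + 1 := ⟨k - 1, by omega⟩
  set S' := MvPolynomial (Fin n) K
  set αI := alphaNum I with hαIdef
  set αp := alphaNum p with hαpdef
  have hpA : IsAssociatedPrime p (MvPolynomial (Fin n) K ⧸ I) := hp
  have hpprime : p.IsPrime := hpA.isPrime
  have hIp : I ≤ p := le_of_isAssociatedPrime' hpA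
  have hpbot : p ≠ ⊥ := fun h => hne (le_bot_iff.mp (h ▸ hIp))
  have hIhom := isHom_of_isHomogeneousIdeal hhom
  have hphom := min_prime_homogeneous hIhom (hnoemb p hp)
  -- basic alpha facts
  obtain ⟨f₀, hf₀I, hf₀0, hf₀d⟩ := alpha_mem' hne
  have hαle : αp ≤ αI := by
    rw [hαpdef, hαIdef, ← hf₀d]
    exact alpha_le' (hIp hf₀I) hf₀0
  have hαp1 : 1 ≤ αp := alpha_pos hpprime hpbot
  -- homogeneous element of I of minimal degree
  have hsupp : f₀.support.Nonempty := MvPolynomial.support_nonempty.mpr hf₀0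
  obtain ⟨m₀, hm₀, hm₀d⟩ :=
    Finset.exists_mem_eq_sup _ hsupp (fun m : Fin n →₀ ℕ => m.sum fun _ e => e)
  set h := homogeneousComponent αI f₀ with hhdef
  have hhmem : h ∈ I := comp_mem' hIhom hf₀I αI
  have hhhom : h.IsHomogeneous αI := homogeneousComponent_isHomogeneous αI f₀
  have hh0 : h ≠ 0 := by
    intro hzero
    have hco : coeff m₀ h = coeff m₀ f₀ := by
      rw [hhdef, coeff_homogeneousComponent, if_pos]
      show Finsupp.degree m₀ = αI
      rw [show Finsupp.degree m₀ = m₀.sum fun _ e => e from rfl, ← hm₀d]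
      exact hf₀d
    rw [hzero, coeff_zero] at hco
    exact (MvPolynomial.mem_support_iff.mp hm₀) hco.symm
  -- homogeneous witness for I and p
  obtain ⟨g, hgcol⟩ := assoc_colon hpA
  obtain ⟨i, fw, hfwhom, hfwcol⟩ := exists_homog_witness hIhom hphom hpprime hgcol
  have hvset : {d | ∃ f : MvPolynomial (Fin n) K, f.IsHomogeneous d ∧
      I.colon (Ideal.span {f}) = p}.Nonempty := ⟨i, fw, hfwhom, hfwcol⟩
  have hvmem : ∃ f : MvPolynomial (Fin n) K, f.IsHomogeneous (vNumberAt I p) ∧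
      I.colon (Ideal.span {f}) = p := Nat.sInf_mem hvset
  obtain ⟨f, hfhom, hfcol⟩ := hvmem
  set v := vNumberAt I p with hvdef
  have hvap : v + αp = αI := by
    have h1 : (v : ℤ) + (αp : ℤ) = (αI : ℤ) := by rw [hv]; ring
    exact_mod_cast h1
  have hf0 : f ≠ 0 := by
    intro h0
    rw [h0, colon_zero'] at hfcol
    exact hpprime.ne_top hfcol.symm
  -- the witness for I^k
  set F := f * h ^ k' with hFdef
  set D := v + αI * k' with hDdef
  have hFhom : F.IsHomogeneous D := hfhom.mul (hhhom.pow k')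
  have hF0 : F ≠ 0 := mul_ne_zero hf0 (pow_ne_zero _ hh0)
  set t := (k' + 1) * αI with htdef
  have hD : D + αp = t := by
    have h1 : D + αp = (v + αp) + αI * k' := by rw [hDdef]; ring
    rw [h1, hvap, htdef]; ring
  have hIkhi : I ^ (k' + 1) ≤ hiIdeal K n t := pow_le_hiIdeal (le_hiIdeal_self hhom) (k' + 1)
  set J := (I ^ (k' + 1)).colon (Ideal.span {F}) with hJdef
  have hpJ : p ≤ J := by
    intro x hxp
    rw [hJdef, Ideal.mem_colon_span_singleton]
    have hxf : x * f ∈ I := by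
      rw [← Ideal.mem_colon_span_singleton (I := I) (x := f), hfcol]
      exact hxp
    rw [show x * F = h ^ k' * (x * f) by rw [hFdef]; ring, pow_succ]
    exact Ideal.mul_mem_mul (Ideal.pow_mem_pow hhmem k') hxf
  have hJne : J ≠ ⊤ := by
    intro hT
    have h1 : (1 : MvPolynomial (Fin n) K) ∈ J := hT ▸ Submodule.mem_top
    rw [hJdef, Ideal.mem_colon_span_singleton, one_mul] at h1
    have h2 : t ≤ F.totalDegree := totalDegree_ge_of_mem_hi (hIkhi h1) hF0
    rw [hFhom.totalDegree hF0] at h2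
    omega
  -- J = p, via an associated prime of J
  haveI := Ideal.Quotient.nontrivial_iff.mpr hJne
  obtain ⟨q, hq⟩ := associatedPrimes.nonempty (MvPolynomial (Fin n) K)
    (MvPolynomial (Fin n) K ⧸ J)
  have hqJ : IsAssociatedPrime q (MvPolynomial (Fin n) K ⧸ J) := hq
  obtain ⟨c, hccol⟩ := assoc_colon hqJ
  have hcoloneq : (I ^ (k' + 1)).colon (Ideal.span {c * F}) = q := by
    rw [← hccol]
    ext r
    rw [Ideal.mem_colon_span_singleton, Ideal.mem_colon_span_singleton, hJdef,
      Ideal.mem_colon_span_singleton, show r * (c * F) = r * c * F by ring]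
  have hqIk : IsAssociatedPrime q
      (MvPolynomial (Fin n) K ⧸ (I ^ (k' + 1))) :=
    isAssociatedPrime_of_colon hqJ.isPrime (c * F) hcoloneq
  have hqAssI : q ∈ Ass I := hntf (k' + 1) (by omega) hqIk
  have hqmin := hnoemb q hqAssI
  have hJq : J ≤ q := by
    rw [← hccol]
    intro a ha
    rw [Ideal.mem_colon_span_singleton]
    exact Ideal.mul_mem_right c J ha
  have hqp : q ≤ p := hqmin.2 ⟨hpprime, hIp⟩ (le_trans hpJ hJq)
  have hJp : J = p := le_antisymm (le_trans hJq hqp) hpJ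
  -- conclude : the v-number of I^k at p equals D
  have hmemB : D ∈ {d | ∃ f' : MvPolynomial (Fin n) K, f'.IsHomogeneous d ∧
      (I ^ (k' + 1)).colon (Ideal.span {f'}) = p} := ⟨F, hFhom, by rw [← hJdef]; exact hJp⟩
  obtain ⟨g₀, hg₀p, hg₀0, hg₀d⟩ := alpha_mem' hpbot
  have hlow : ∀ d ∈ {d | ∃ f' : MvPolynomial (Fin n) K, f'.IsHomogeneous d ∧
      (I ^ (k' + 1)).colon (Ideal.span {f'}) = p}, D ≤ d := by
    rintro d ⟨f', hf'hom, hf'col⟩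
    have hf'0 : f' ≠ 0 := by
      intro h0
      rw [h0, colon_zero'] at hf'col
      exact hpprime.ne_top hf'col.symm
    have hgf : g₀ * f' ∈ I ^ (k' + 1) := by
      rw [← Ideal.mem_colon_span_singleton (I := I ^ (k' + 1)) (x := f'), hf'col]
      exact hg₀p
    have hgf0 : g₀ * f' ≠ 0 := mul_ne_zero hg₀0 hf'0
    have h1 : t ≤ (g₀ * f').totalDegree := totalDegree_ge_of_mem_hi (hIkhi hgf) hgf0
    have h2 : (g₀ * f').totalDegree ≤ αp + d := by
      refine le_trans (MvPolynomial.totalDegree_mul _ _) ?_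
      exact add_le_add (le_of_eq hg₀d) hf'hom.totalDegree_le
    omega
  have hsinf : vNumberAt (I ^ (k' + 1)) p = D := by
    refine le_antisymm (Nat.sInf_le hmemB) ?_
    exact hlow _ (Nat.sInf_mem ⟨D, hmemB⟩)
  rw [hsinf]
  have hDz : (D : ℤ) + (αp : ℤ) = ((k' + 1 : ℕ) : ℤ) * (αI : ℤ) := by
    rw [htdef] at hD
    exact_mod_cast hD
  push_cast at hDz ⊢
  linarith
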